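/- In a category with pullbacks and binary products, let f : X → Y and g : Z → W have kernel pairs, and let h : X → Z be a monomorphism and t : Y → W such that (f, h, t, g) is a pullback square. Then the square formed by the induced arrow k_h : K_f → K_g, the pairings ⟨π¹_f, π²_f⟩ : K_f → X × X, ⟨π¹_g, π²_g⟩ : K_g → Z × Z, and h × h : X × X → Z × Z is a pullback. -/

import Mathlib

open CategoryTheory CategoryTheory.Limits

universe v u

/-- In a category with pullbacks and binary products, if `h` is a monomorphism and the
square `(h, f, g, t)` is a pullback, then the square formed by the induced arrow
`k : K_f ⟶ K_g`, the pairings `⟨f₁, f₂⟩`, `⟨g₁, g₂⟩` and `h × h` is a pullback. -/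
theorem kernelPair_induced_pullback_prod {C : Type u} [Category.{v} C]
    [HasPullbacks C] [HasBinaryProducts C] {X Y Z W Kf Kg : C}
    (f : X ⟶ Y) (g : Z ⟶ W) (h : X ⟶ Z) (t : Y ⟶ W)
    (f₁ f₂ : Kf ⟶ X) (g₁ g₂ : Kg ⟶ Z)
    (hf : IsKernelPair f f₁ f₂) (hg : IsKernelPair g g₁ g₂)
    (hmono : Mono h) (hpb : IsPullback h f g t) :
    ∀ k : Kf ⟶ Kg, k ≫ g₁ = f₁ ≫ h → k ≫ g₂ = f₂ ≫ h →
      IsPullback k (prod.lift f₁ f₂) (prod.lift g₁ g₂) (prod.map h h) := by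
  intro k hk₁ hk₂
  have comm : k ≫ prod.lift g₁ g₂ = prod.lift f₁ f₂ ≫ prod.map h h := by
    apply Limits.prod.hom_ext <;> simp [hk₁, hk₂]
  -- key: for any cone, the two components composed with f agree
  have key : ∀ {P : C} (a : P ⟶ Kg) (b : P ⟶ X ⨯ X),
      a ≫ prod.lift g₁ g₂ = b ≫ prod.map h h →
      (b ≫ prod.fst) ≫ f = (b ≫ prod.snd) ≫ f := by
    intro P a b w
    have e₁ : a ≫ g₁ = b ≫ prod.fst ≫ h := by
      have := w =≫ prod.fst; simpa only [Category.assoc, prod.lift_fst, prod.map_fst] using this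
    have e₂ : a ≫ g₂ = b ≫ prod.snd ≫ h := by
      have := w =≫ prod.snd; simpa only [Category.assoc, prod.lift_snd, prod.map_snd] using this
    have hgg : g₁ ≫ g = g₂ ≫ g := hg.w
    have hfg : h ≫ g = f ≫ t := hpb.w
    have wlift : (a ≫ g₂) ≫ g = (b ≫ prod.fst ≫ f) ≫ t := by
      rw [Category.assoc, ← hgg, ← Category.assoc, e₁]
      simp [hfg]
    set m := hpb.lift (a ≫ g₂) (b ≫ prod.fst ≫ f) wlift with hmdef
    have hm₁ := hpb.lift_fst (a ≫ g₂) (b ≫ prod.fst ≫ f) wlift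
    have hm₂ := hpb.lift_snd (a ≫ g₂) (b ≫ prod.fst ≫ f) wlift
    have hmb : m = b ≫ prod.snd := by
      have : m ≫ h = (b ≫ prod.snd) ≫ h := by rw [hm₁, e₂]; simp
      exact hmono.right_cancellation _ _ this
    calc (b ≫ prod.fst) ≫ f = m ≫ f := by rw [hm₂]; simp
      _ = (b ≫ prod.snd) ≫ f := by rw [hmb]
  refine IsPullback.of_isLimit' ⟨comm⟩ ?_
  refine PullbackCone.IsLimit.mk _
    (fun s => hf.lift (s.snd ≫ prod.fst) (s.snd ≫ prod.snd)
      (key s.fst s.snd s.condition)) ?_ ?_ ?_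
  · intro s
    apply hg.isLimit.hom_ext
    apply (PullbackCone.mk g₁ g₂ hg.w).equalizer_ext
    · have hc := s.condition =≫ prod.fst
      simp only [Category.assoc, prod.lift_fst, prod.map_fst] at hc
      simp only [PullbackCone.mk_fst]
      show (_ ≫ k) ≫ g₁ = s.fst ≫ g₁
      rw [Category.assoc, hk₁, ← Category.assoc, IsKernelPair.lift_fst, hc, Category.assoc]
    · have hc := s.condition =≫ prod.snd
      simp only [Category.assoc, prod.lift_snd, prod.map_snd] at hc
      simp only [PullbackCone.mk_snd]
      show (_ ≫ k) ≫ g₂ = s.fst ≫ g₂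
      rw [Category.assoc, hk₂, ← Category.assoc, IsKernelPair.lift_snd, hc, Category.assoc]
  · intro s
    apply Limits.prod.hom_ext <;> simp only [Category.assoc, prod.lift_fst, prod.lift_snd, IsKernelPair.lift_fst, IsKernelPair.lift_snd]
  · intro s l h₁ h₂
    apply hf.isLimit.hom_ext
    apply (PullbackCone.mk f₁ f₂ hf.w).equalizer_ext
    · simp only [PullbackCone.mk_fst]
      show l ≫ f₁ = (hf.lift (s.snd ≫ prod.fst) (s.snd ≫ prod.snd) _ : s.pt ⟶ Kf) ≫ f₁
      rw [IsKernelPair.lift_fst]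
      have := h₂ =≫ prod.fst
      simpa only [Category.assoc, prod.lift_fst] using this
    · simp only [PullbackCone.mk_snd]
      show l ≫ f₂ = (hf.lift (s.snd ≫ prod.fst) (s.snd ≫ prod.snd) _ : s.pt ⟶ Kf) ≫ f₂
      rw [IsKernelPair.lift_snd]
      have := h₂ =≫ prod.snd
      simpa only [Category.assoc, prod.lift_snd] using this
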